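/- (Subtractive dithering.) Let Δ > 0, let uni_Δ: ℝ → ℝ be the uniform quantizer uni_Δ(y) = Δ·⌊y/Δ + 1/2⌋ (rounding to the nearest multiple of Δ), let X be a real-valued random variable, and let u be uniformly distributed on [−Δ/2, Δ/2) and independent of X. Then the quantization error ε := uni_Δ(X + u) − (X + u) is uniformly distributed on an interval of length Δ centered at 0, and ε is independent of X. -/

import Mathlib

open MeasureTheory

/-- The uniform quantizer with step size `Δ`, rounding to the nearest multiple of
`Δ`: `uni_Δ(y) = Δ·⌊y/Δ + 1/2⌋`. -/
noncomputable def uniQuant (Δ : ℝ) (y : ℝ) : ℝ :=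
  Δ * (⌊y / Δ + 1 / 2⌋ : ℤ)

lemma uniQuant_measurable (Δ : ℝ) : Measurable (uniQuant Δ) := by
  have h1 : Measurable fun y : ℝ => ((⌊y / Δ + 1 / 2⌋ : ℤ) : ℝ) :=
    measurable_from_top.comp (Measurable.floor (by fun_prop))
  exact measurable_const.mul h1

/-- Pushing forward a restricted Lebesgue measure along a reflection `t ↦ a - t`. -/
lemma map_reflect_restrict (a : ℝ) (J : Set ℝ) (hJ : MeasurableSet J) :
    Measure.map (fun t => a - t) (volume.restrict ((fun t => a - t) ⁻¹' J))
      = volume.restrict J := by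
  have hmp := Measure.measurePreserving_sub_left (volume : Measure ℝ) a
  ext s hs
  rw [Measure.map_apply hmp.measurable hs, Measure.restrict_apply (hmp.measurable hs),
    Measure.restrict_apply hs, ← Set.preimage_inter]
  exact hmp.measure_preimage (hs.inter hJ).nullMeasurableSet

/-- The heart: for every fixed `x`, the dithered quantization error as a function of the
dither pushes the uniform measure on `[-Δ/2, Δ/2)` to the uniform measure on
`(-Δ/2, Δ/2]`. -/
lemma map_dither (Δ : ℝ) (hΔ : 0 < Δ) (x : ℝ) :
    Measure.map (fun t => uniQuant Δ (x + t) - (x + t))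
      ((ENNReal.ofReal Δ)⁻¹ • volume.restrict (Set.Ico (-(Δ / 2)) (Δ / 2)))
      = (ENNReal.ofReal Δ)⁻¹ • volume.restrict (Set.Ioc (-(Δ / 2)) (Δ / 2)) := by
  have hΔ' : Δ ≠ 0 := ne_of_gt hΔ
  set k : ℤ := ⌊x / Δ⌋ with hk
  set c : ℝ := x - Δ * k with hc
  have hxc : x = Δ * k + c := by rw [hc]; ring
  have hc0 : 0 ≤ c := by
    have h1 : (k : ℝ) ≤ x / Δ := Int.floor_le (x / Δ)
    have hdiv : Δ * (x / Δ) = x := by field_simp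
    nlinarith
  have hc1 : c < Δ := by
    have h1 : x / Δ < (k : ℝ) + 1 := Int.lt_floor_add_one (x / Δ)
    have hdiv : Δ * (x / Δ) = x := by field_simp
    nlinarith
  set t₀ : ℝ := Δ / 2 - c with ht₀
  clear_value t₀ c k
  have ht₀1 : -(Δ / 2) ≤ t₀ := by rw [ht₀]; linarith
  have ht₀2 : t₀ ≤ Δ / 2 := by rw [ht₀]; linarith
  have hmeas : Measurable (fun t => uniQuant Δ (x + t) - (x + t)) :=
    ((uniQuant_measurable Δ).comp (measurable_const.add measurable_id)).sub
      (measurable_const.add measurable_id)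
  -- pointwise formulas on the two pieces
  have hf1 : ∀ t ∈ Set.Ico (-(Δ / 2)) t₀, uniQuant Δ (x + t) - (x + t) = -c - t := by
    intro t ht
    obtain ⟨ht1, ht2⟩ := ht
    have hfl : ⌊(x + t) / Δ + 1 / 2⌋ = k := by
      rw [Int.floor_eq_iff]
      have hxt : (x + t) / Δ + 1 / 2 = (k : ℝ) + (c + t + Δ / 2) / Δ := by
        rw [hxc]; field_simp; ring
      constructor
      · rw [hxt]
        have : 0 ≤ (c + t + Δ / 2) / Δ := div_nonneg (by linarith) hΔ.le
        linarith
      · rw [hxt]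
        have : (c + t + Δ / 2) / Δ < 1 := (div_lt_one hΔ).2 (by linarith)
        linarith
    unfold uniQuant
    rw [hfl]
    linarith [hxc]
  have hf2 : ∀ t ∈ Set.Ico t₀ (Δ / 2), uniQuant Δ (x + t) - (x + t) = Δ - c - t := by
    intro t ht
    obtain ⟨ht1, ht2⟩ := ht
    have hfl : ⌊(x + t) / Δ + 1 / 2⌋ = k + 1 := by
      rw [Int.floor_eq_iff]
      have hxt : (x + t) / Δ + 1 / 2 = ((k : ℝ) + 1) + (c + t - Δ / 2) / Δ := by
        rw [hxc]; field_simp; ring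
      constructor
      · rw [hxt]
        have : 0 ≤ (c + t - Δ / 2) / Δ := div_nonneg (by linarith) hΔ.le
        push_cast
        linarith
      · rw [hxt]
        have : (c + t - Δ / 2) / Δ < 1 := (div_lt_one hΔ).2 (by linarith)
        push_cast
        linarith
    unfold uniQuant
    rw [hfl]
    push_cast
    linarith [hxc]
  -- preimage identifications
  have hpre1 : Set.Ico (-(Δ / 2)) t₀ = (fun t => -c - t) ⁻¹' Set.Ioc (-(Δ / 2)) t₀ := by
    ext t
    simp only [Set.mem_Ico, Set.mem_preimage, Set.mem_Ioc]
    constructor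
    · rintro ⟨h1, h2⟩
      exact ⟨by linarith, by linarith⟩
    · rintro ⟨h1, h2⟩
      exact ⟨by linarith, by linarith⟩
  have hpre2 : Set.Ico t₀ (Δ / 2) = (fun t => (Δ - c) - t) ⁻¹' Set.Ioc t₀ (Δ / 2) := by
    ext t
    simp only [Set.mem_Ico, Set.mem_preimage, Set.mem_Ioc]
    constructor
    · rintro ⟨h1, h2⟩
      exact ⟨by linarith, by linarith⟩
    · rintro ⟨h1, h2⟩
      exact ⟨by linarith, by linarith⟩
  -- compute the two pieces
  have h1 : Measure.map (fun t => uniQuant Δ (x + t) - (x + t))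
      (volume.restrict (Set.Ico (-(Δ / 2)) t₀)) = volume.restrict (Set.Ioc (-(Δ / 2)) t₀) := by
    have hae : (fun t => uniQuant Δ (x + t) - (x + t))
        =ᵐ[volume.restrict (Set.Ico (-(Δ / 2)) t₀)] fun t => -c - t := by
      filter_upwards [ae_restrict_mem measurableSet_Ico] with t ht using hf1 t ht
    rw [Measure.map_congr hae, hpre1]
    exact map_reflect_restrict (-c) _ measurableSet_Ioc
  have h2 : Measure.map (fun t => uniQuant Δ (x + t) - (x + t))
      (volume.restrict (Set.Ico t₀ (Δ / 2))) = volume.restrict (Set.Ioc t₀ (Δ / 2)) := by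
    have hae : (fun t => uniQuant Δ (x + t) - (x + t))
        =ᵐ[volume.restrict (Set.Ico t₀ (Δ / 2))] fun t => (Δ - c) - t := by
      filter_upwards [ae_restrict_mem measurableSet_Ico] with t ht using hf2 t ht
    rw [Measure.map_congr hae, hpre2]
    exact map_reflect_restrict (Δ - c) _ measurableSet_Ioc
  -- put everything together
  rw [Measure.map_smul]
  congr 1
  rw [← Set.Ico_union_Ico_eq_Ico ht₀1 ht₀2,
    Measure.restrict_union Set.Ico_disjoint_Ico_same measurableSet_Ico,
    Measure.map_add _ _ hmeas, h1, h2,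
    ← Measure.restrict_union (Set.Ioc_disjoint_Ioc_of_le le_rfl) measurableSet_Ioc,
    Set.Ioc_union_Ioc_eq_Ioc ht₀1 ht₀2]

/-- Subtractive dithering.  Let `Δ > 0`, let `X` be a real random variable, and let
`u` be uniform on `[−Δ/2, Δ/2)` and independent of `X`.  Then the quantization
error `ε := uni_Δ(X + u) − (X + u)` is uniformly distributed on an interval of
length `Δ` centered at `0` (namely `(−Δ/2, Δ/2]`), and `ε` is independent of `X`. -/
theorem subtractive_dither_error_uniform_indep
    {Ω : Type*} [MeasurableSpace Ω] (μ : Measure Ω) [IsProbabilityMeasure μ]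
    (Δ : ℝ) (hΔ : 0 < Δ)
    (X u : Ω → ℝ) (hX : Measurable X) (hu : Measurable u)
    (huni : Measure.map u μ
      = (ENNReal.ofReal Δ)⁻¹ • volume.restrict (Set.Ico (-(Δ / 2)) (Δ / 2)))
    (hindep : ProbabilityTheory.IndepFun X u μ) :
    Measure.map (fun ω => uniQuant Δ (X ω + u ω) - (X ω + u ω)) μ
        = (ENNReal.ofReal Δ)⁻¹ • volume.restrict (Set.Ioc (-(Δ / 2)) (Δ / 2)) ∧
    ProbabilityTheory.IndepFun
      (fun ω => uniQuant Δ (X ω + u ω) - (X ω + u ω)) X μ := by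
  classical
  set ν : Measure ℝ := (ENNReal.ofReal Δ)⁻¹ • volume.restrict (Set.Ioc (-(Δ / 2)) (Δ / 2))
    with hν
  set f : ℝ × ℝ → ℝ := fun p => uniQuant Δ (p.1 + p.2) - (p.1 + p.2) with hfdef
  have hfm : Measurable f :=
    ((uniQuant_measurable Δ).comp (measurable_fst.add measurable_snd)).sub
      (measurable_fst.add measurable_snd)
  have hεm : Measurable (fun ω => uniQuant Δ (X ω + u ω) - (X ω + u ω)) :=
    ((uniQuant_measurable Δ).comp (hX.add hu)).sub (hX.add hu)
  have hmap : Measure.map (fun ω => (X ω, u ω)) μ = (Measure.map X μ).prod (Measure.map u μ) :=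
    (ProbabilityTheory.indepFun_iff_map_prod_eq_prod_map_map hX.aemeasurable
      hu.aemeasurable).mp hindep
  rw [huni] at hmap
  have key : ∀ B A : Set ℝ, MeasurableSet B → MeasurableSet A →
      μ ((fun ω => uniQuant Δ (X ω + u ω) - (X ω + u ω)) ⁻¹' B ∩ X ⁻¹' A)
        = ν B * Measure.map X μ A := by
    intro B A hB hA
    have hS : MeasurableSet (f ⁻¹' B ∩ A ×ˢ (Set.univ : Set ℝ)) :=
      (hfm hB).inter (hA.prod MeasurableSet.univ)
    have hpre : (fun ω => uniQuant Δ (X ω + u ω) - (X ω + u ω)) ⁻¹' B ∩ X ⁻¹' A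
        = (fun ω => (X ω, u ω)) ⁻¹' (f ⁻¹' B ∩ A ×ˢ (Set.univ : Set ℝ)) := by
      ext ω
      simp [hfdef, Set.mem_prod]
    rw [hpre, ← Measure.map_apply (hX.prodMk hu) hS, hmap, Measure.prod_apply hS]
    have hsec : ∀ x : ℝ,
        ((ENNReal.ofReal Δ)⁻¹ • volume.restrict (Set.Ico (-(Δ / 2)) (Δ / 2)))
            (Prod.mk x ⁻¹' (f ⁻¹' B ∩ A ×ˢ (Set.univ : Set ℝ)))
          = A.indicator (fun _ => ν B) x := by
      intro x
      by_cases hx : x ∈ A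
      · have hxpre : Prod.mk x ⁻¹' (f ⁻¹' B ∩ A ×ˢ (Set.univ : Set ℝ))
            = (fun t => uniQuant Δ (x + t) - (x + t)) ⁻¹' B := by
          ext t
          simp [hfdef, hx]
        have hg : Measurable (fun t => uniQuant Δ (x + t) - (x + t)) :=
          ((uniQuant_measurable Δ).comp (measurable_const.add measurable_id)).sub
            (measurable_const.add measurable_id)
        rw [hxpre, Set.indicator_of_mem hx, ← Measure.map_apply hg hB, map_dither Δ hΔ x, hν]
      · have hxpre : Prod.mk x ⁻¹' (f ⁻¹' B ∩ A ×ˢ (Set.univ : Set ℝ)) = ∅ := by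
          ext t
          simp [hfdef, hx]
        rw [hxpre, Set.indicator_of_notMem hx]
        simp
    rw [lintegral_congr hsec, lintegral_indicator_const hA]
  have hlaw : Measure.map (fun ω => uniQuant Δ (X ω + u ω) - (X ω + u ω)) μ = ν := by
    ext B hB
    rw [Measure.map_apply hεm hB]
    have h := key B Set.univ hB MeasurableSet.univ
    have huniv : Measure.map X μ Set.univ = 1 := by
      rw [Measure.map_apply hX MeasurableSet.univ]
      simp
    simpa [huniv] using h
  refine ⟨hlaw, ?_⟩
  rw [ProbabilityTheory.indepFun_iff_measure_inter_preimage_eq_mul]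
  intro s t hs ht
  rw [key s t hs ht, Measure.map_apply hX ht]
  have : μ ((fun ω => uniQuant Δ (X ω + u ω) - (X ω + u ω)) ⁻¹' s) = ν s := by
    rw [← Measure.map_apply hεm hs, hlaw]
  rw [this]
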